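/- The function g(x) = (1 − cos x)/x² is strictly decreasing on (0, π], and in particular for 0 < x ≤ π one has (1 − cos x)/x² ≥ 2/π². -/

import Mathlib

open Real Set

lemma aux_k : ∀ x ∈ Set.Ioc (0:ℝ) Real.pi, x * Real.cos x - Real.sin x < 0 := by
  have hanti : StrictAntiOn (fun x : ℝ => x * Real.cos x - Real.sin x) (Set.Icc 0 Real.pi) := by
    apply strictAntiOn_of_deriv_neg (convex_Icc _ _)
    · fun_prop
    · intro x hx
      rw [interior_Icc] at hx
      have hd : HasDerivAt (fun x : ℝ => x * Real.cos x - Real.sin x) (-(x * Real.sin x)) x := by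
        have := ((hasDerivAt_id x).mul (Real.hasDerivAt_cos x)).sub (Real.hasDerivAt_sin x)
        refine this.congr_deriv ?_
        simp [id_eq]
      rw [hd.deriv]
      have := Real.sin_pos_of_pos_of_lt_pi hx.1 hx.2
      nlinarith [mul_pos hx.1 this]
  intro x hx
  have := hanti (Set.left_mem_Icc.2 Real.pi_pos.le) (Set.Ioc_subset_Icc_self hx) hx.1
  simpa using this

lemma aux_h : ∀ x ∈ Set.Ioc (0:ℝ) Real.pi, x * Real.sin x + 2 * Real.cos x - 2 < 0 := by
  have hanti : StrictAntiOn (fun x : ℝ => x * Real.sin x + 2 * Real.cos x - 2) (Set.Icc 0 Real.pi) := by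
    apply strictAntiOn_of_deriv_neg (convex_Icc _ _)
    · fun_prop
    · intro x hx
      rw [interior_Icc] at hx
      have hd : HasDerivAt (fun x : ℝ => x * Real.sin x + 2 * Real.cos x - 2)
          (x * Real.cos x - Real.sin x) x := by
        have := (((hasDerivAt_id x).mul (Real.hasDerivAt_sin x)).add
          ((Real.hasDerivAt_cos x).const_mul 2)).sub_const 2
        refine this.congr_deriv ?_
        simp [id_eq]
        ring
      rw [hd.deriv]
      exact aux_k x ⟨hx.1, hx.2.le⟩
  intro x hx
  have := hanti (Set.left_mem_Icc.2 Real.pi_pos.le) (Set.Ioc_subset_Icc_self hx) hx.1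
  simpa using this

lemma aux_anti : StrictAntiOn (fun x : ℝ => (1 - Real.cos x) / x ^ 2) (Set.Ioc 0 Real.pi) := by
  apply strictAntiOn_of_deriv_neg (convex_Ioc _ _)
  · apply ContinuousOn.div
    · fun_prop
    · fun_prop
    · intro x hx
      exact pow_ne_zero 2 (ne_of_gt hx.1)
  · intro x hx
    rw [interior_Ioc] at hx
    have hx0 : (0:ℝ) < x := hx.1
    have hd : HasDerivAt (fun x : ℝ => (1 - Real.cos x) / x ^ 2)
        ((Real.sin x * x ^ 2 - (1 - Real.cos x) * (2 * x)) / (x ^ 2) ^ 2) x := by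
      have h1 : HasDerivAt (fun x : ℝ => 1 - Real.cos x) (Real.sin x) x := by
        have := (Real.hasDerivAt_cos x).const_sub 1
        refine this.congr_deriv ?_
        ring
      have h2 : HasDerivAt (fun x : ℝ => x ^ 2) (2 * x) x := by
        have := hasDerivAt_pow 2 x
        simpa using this
      exact h1.div h2 (by positivity)
    rw [hd.deriv]
    apply div_neg_of_neg_of_pos
    · have := aux_h x ⟨hx.1, hx.2.le⟩
      nlinarith
    · positivity

theorem stmt_10 :
    StrictAntiOn (fun x : ℝ => (1 - Real.cos x) / x ^ 2) (Set.Ioc 0 Real.pi) ∧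
      ∀ x : ℝ, 0 < x → x ≤ Real.pi →
        (1 - Real.cos x) / x ^ 2 ≥ 2 / Real.pi ^ 2 := by
  refine ⟨aux_anti, ?_⟩
  intro x hx0 hxpi
  have hpi : (1 - Real.cos Real.pi) / Real.pi ^ 2 = 2 / Real.pi ^ 2 := by
    rw [Real.cos_pi]; norm_num
  rcases eq_or_lt_of_le hxpi with h | h
  · rw [h, hpi]
  · have h2 : (1 - Real.cos Real.pi) / Real.pi ^ 2 < (1 - Real.cos x) / x ^ 2 :=
      aux_anti ⟨hx0, hxpi⟩ ⟨Real.pi_pos, le_refl _⟩ h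
    rw [hpi] at h2
    exact h2.le
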